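/- arXiv:2302.12146 — 8 statements merged into one kernel-verified Lean document; each statement's English description precedes it below -/
import Mathlib

section
/- Let g ≥ 2 and h ≥ 1 be integers with 2h ≤ g, let ε > 0, and let a_{2h+2}, …, a_{2g+2} be pairwise distinct complex numbers with |a_r| > ε and |a_r| > ε² for every r. Define the polynomial G(s,u,v) = (u^{2h+1} − s^{2(2h+1)}·v^{2h+1})·∏_{r=2h+2}^{2g+2}(u − a_r·v) on ℂ³. Then the set of points (s,u,v) ∈ ℂ³ with |s| ≤ ε and (u,v) ≠ (0,0) at which G and all three partial derivatives ∂G/∂s, ∂G/∂u, ∂G/∂v vanish is exactly {(0, 0, v) : v ∈ ℂ, v ≠ 0}. (Equivalently: the curve B_{h,g−h} ⊂ D_ε × ℂP¹ has exactly one singular point, namely (0,(0:1)).) -/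
/-- The branch curve `B_{h,g−h} ⊂ D_ε × ℂP¹` cut out by
`(u^{2h+1} − s^{2(2h+1)} v^{2h+1})·∏_{r=2h+2}^{2g+2}(u − a_r v) = 0` has exactly
one singular point, namely `(0,(0:1))`: the critical zeros of the defining
polynomial with `|s| ≤ ε` and `(u,v) ≠ (0,0)` are exactly the points `(0,0,v)`
with `v ≠ 0`. -/
theorem stmt_1 (g h : ℕ) (hg : 2 ≤ g) (hh : 1 ≤ h) (hhg : 2 * h ≤ g)
    (ε : ℝ) (hε : 0 < ε) (a : ℕ → ℂ)
    (ha_inj : Set.InjOn a ↑(Finset.Icc (2 * h + 2) (2 * g + 2)))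
    (ha_abs : ∀ r ∈ Finset.Icc (2 * h + 2) (2 * g + 2), ε < ‖a r‖)
    (ha_abs2 : ∀ r ∈ Finset.Icc (2 * h + 2) (2 * g + 2), ε ^ 2 < ‖a r‖)
    (G : ℂ → ℂ → ℂ → ℂ)
    (hG : ∀ s u v, G s u v =
      (u ^ (2 * h + 1) - s ^ (2 * (2 * h + 1)) * v ^ (2 * h + 1)) *
        ∏ r ∈ Finset.Icc (2 * h + 2) (2 * g + 2), (u - a r * v)) :
    ∀ s u v : ℂ,
      (‖s‖ ≤ ε ∧ ¬(u = 0 ∧ v = 0) ∧ G s u v = 0 ∧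
        deriv (fun s' => G s' u v) s = 0 ∧ deriv (fun u' => G s u' v) u = 0 ∧
        deriv (fun v' => G s u v') v = 0) ↔ (s = 0 ∧ u = 0 ∧ v ≠ 0) := by
  intro s u v
  set n := 2 * h + 1 with hn
  set S := Finset.Icc (2 * h + 2) (2 * g + 2) with hS
  constructor
  · rintro ⟨hs, hne, hG0, _hds, hdu, _hdv⟩
    by_cases hQ0 : (∏ r ∈ S, (u - a r * v)) = 0
    · -- Case Q = 0 : derive a contradiction
      exfalso
      obtain ⟨r, hrS, hr⟩ := Finset.prod_eq_zero_iff.mp hQ0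
      have hu : u = a r * v := by linear_combination hr
      have hv : v ≠ 0 := by
        intro hv0
        exact hne ⟨by simp [hu, hv0], hv0⟩
      have hvn : v ^ n ≠ 0 := pow_ne_zero _ hv
      -- P ≠ 0 at this point
      have habs : ‖s ^ (2 * n)‖ < ‖(a r) ^ n‖ := by
        rw [norm_pow, norm_pow]
        have h1 : ‖s‖ ^ (2 * n) ≤ (ε ^ 2) ^ n := by
          rw [pow_mul]
          exact pow_le_pow_left₀ (by positivity) (pow_le_pow_left₀ (norm_nonneg s) hs 2) n
        have h2 : (ε ^ 2) ^ n < ‖a r‖ ^ n :=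
          pow_lt_pow_left₀ (ha_abs2 r hrS) (by positivity) (by omega)
        exact lt_of_le_of_lt h1 h2
      have hane : s ^ (2 * n) ≠ (a r) ^ n := fun he => by rw [he] at habs; exact lt_irrefl _ habs
      have hP : u ^ n - s ^ (2 * n) * v ^ n ≠ 0 := by
        rw [hu, mul_pow]
        intro he
        have h0 : ((a r) ^ n - s ^ (2 * n)) * v ^ n = 0 := by linear_combination he
        rcases mul_eq_zero.mp h0 with h1 | h1
        · exact hane (by linear_combination -h1)
        · exact hvn h1
      -- rewrite the u-slice function, factoring out (u' - a r * v)
      set T : ℂ → ℂ := fun u' =>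
        (u' ^ n - s ^ (2 * n) * v ^ n) * ∏ j ∈ S.erase r, (u' - a j * v) with hT
      have hfun : (fun u' => G s u' v) = fun u' => (u' - a r * v) * T u' := by
        funext u'
        rw [hG, hT]
        rw [← Finset.mul_prod_erase S _ hrS]
        ring
      have hTdiff : DifferentiableAt ℂ T u := by
        apply DifferentiableAt.mul
        · exact (differentiableAt_pow n).sub_const _
        · exact DifferentiableAt.fun_finsetProd fun j _ =>
            (differentiableAt_id.sub_const _)
      obtain ⟨d, hd⟩ : ∃ d, HasDerivAt T d u := ⟨_, hTdiff.hasDerivAt⟩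
      have hder : HasDerivAt (fun u' => (u' - a r * v) * T u')
          (1 * T u + (u - a r * v) * d) u :=
        ((hasDerivAt_id u).sub_const (a r * v)).mul hd
      rw [hfun] at hdu
      rw [hder.deriv] at hdu
      rw [hr] at hdu
      simp only [one_mul, zero_mul, add_zero] at hdu
      -- hdu : T u = 0
      rw [hT] at hdu
      rcases mul_eq_zero.mp hdu with h1 | h1
      · exact hP h1
      · obtain ⟨j, hjS, hj⟩ := Finset.prod_eq_zero_iff.mp h1
        have hj' : a j * v = a r * v := by
          have := hu; rw [hu] at hj; linear_combination -hj
        have : a j = a r := mul_right_cancel₀ hv hj'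
        have : j = r := ha_inj (Finset.mem_coe.mpr (Finset.mem_of_mem_erase hjS)) (Finset.mem_coe.mpr hrS) this
        exact (Finset.ne_of_mem_erase hjS) this
    · -- Case Q ≠ 0
      have hP0 : u ^ n - s ^ (2 * n) * v ^ n = 0 := by
        rw [hG] at hG0
        rcases mul_eq_zero.mp hG0 with h1 | h1
        · exact h1
        · exact absurd h1 hQ0
      -- compute deriv in u
      have hQdiff : DifferentiableAt ℂ (fun u' => ∏ j ∈ S, (u' - a j * v)) u :=
        DifferentiableAt.fun_finsetProd fun j _ => (differentiableAt_id.sub_const _)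
      obtain ⟨d, hd⟩ : ∃ d, HasDerivAt (fun u' => ∏ j ∈ S, (u' - a j * v)) d u :=
        ⟨_, hQdiff.hasDerivAt⟩
      have hfun : (fun u' => G s u' v) =
          fun u' => (u' ^ n - s ^ (2 * n) * v ^ n) * ∏ j ∈ S, (u' - a j * v) := by
        funext u'; rw [hG]
      have hder : HasDerivAt (fun u' => (u' ^ n - s ^ (2 * n) * v ^ n) * ∏ j ∈ S, (u' - a j * v))
          ((↑n * u ^ (n - 1)) * (∏ j ∈ S, (u - a j * v)) +
            (u ^ n - s ^ (2 * n) * v ^ n) * d) u :=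
        ((hasDerivAt_pow n u).sub_const _).mul hd
      rw [hfun, hder.deriv, hP0] at hdu
      simp only [zero_mul, add_zero] at hdu
      rcases mul_eq_zero.mp hdu with h1 | h1
      · rcases mul_eq_zero.mp h1 with h2 | h2
        · exfalso
          have : (n : ℂ) ≠ 0 := Nat.cast_ne_zero.mpr (by omega)
          exact this h2
        · have hu0 : u = 0 := by
            have : n - 1 ≠ 0 := by omega
            exact pow_eq_zero_iff this |>.mp h2
          have hv : v ≠ 0 := fun hv0 => hne ⟨hu0, hv0⟩
          have hs0 : s = 0 := by
            rw [hu0] at hP0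
            rw [zero_pow (by omega : n ≠ 0)] at hP0
            have : s ^ (2 * n) * v ^ n = 0 := by linear_combination -hP0
            rcases mul_eq_zero.mp this with h3 | h3
            · exact pow_eq_zero_iff (by omega : 2 * n ≠ 0) |>.mp h3
            · exact absurd h3 (pow_ne_zero _ hv)
          exact ⟨hs0, hu0, hv⟩
      · exact absurd h1 hQ0
  · rintro ⟨hs0, hu0, hv⟩
    subst hs0; subst hu0
    refine ⟨by simp [hε.le], by tauto, ?_, ?_, ?_, ?_⟩
    · rw [hG]; rw [zero_pow (by omega : n ≠ 0)]; simp [zero_pow (show 2 * n ≠ 0 by omega)]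
    · -- deriv in s at 0
      have hfun : (fun s' => G s' (0:ℂ) v) =
          fun s' => -(s' ^ (2 * n) * (v ^ n * ∏ j ∈ S, ((0:ℂ) - a j * v))) := by
        funext s'; rw [hG]; rw [zero_pow (by omega : n ≠ 0)]; ring
      rw [hfun]
      have hder : HasDerivAt
          (fun s' : ℂ => -(s' ^ (2 * n) * (v ^ n * ∏ j ∈ S, ((0:ℂ) - a j * v))))
          (-(↑(2 * n) * (0:ℂ) ^ (2 * n - 1) * (v ^ n * ∏ j ∈ S, ((0:ℂ) - a j * v)))) 0 :=
        (((hasDerivAt_pow (2 * n) (0:ℂ)).mul_const _)).neg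
      rw [hder.deriv]
      rw [zero_pow (by omega : 2 * n - 1 ≠ 0)]
      ring
    · -- deriv in u at 0
      have hfun : (fun u' => G (0:ℂ) u' v) =
          fun u' => u' ^ n * ∏ j ∈ S, (u' - a j * v) := by
        funext u'; rw [hG]
        rw [zero_pow (show 2 * n ≠ 0 by omega)]
        ring
      rw [hfun]
      have hQdiff : DifferentiableAt ℂ (fun u' => ∏ j ∈ S, (u' - a j * v)) 0 :=
        DifferentiableAt.fun_finsetProd fun j _ => (differentiableAt_id.sub_const _)
      obtain ⟨d, hd⟩ : ∃ d, HasDerivAt (fun u' => ∏ j ∈ S, (u' - a j * v)) d 0 :=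
        ⟨_, hQdiff.hasDerivAt⟩
      have hder := ((hasDerivAt_pow n (0:ℂ))).fun_mul hd
      rw [hder.deriv]
      rw [zero_pow (by omega : n - 1 ≠ 0), zero_pow (by omega : n ≠ 0)]
      ring
    · -- deriv in v at 0 : function is constantly 0
      have hfun : (fun v' => G (0:ℂ) (0:ℂ) v') = fun _ => (0:ℂ) := by
        funext v'; rw [hG]
        rw [zero_pow (by omega : n ≠ 0), zero_pow (show 2 * n ≠ 0 by omega)]
        ring
      rw [hfun, deriv_const]
end

section
/- Let g ≥ 2 be an integer, let ε > 0, and let a₃, …, a_{2g+2} be pairwise distinct complex numbers with |a_r| > ε and |a_r|² > ε for every r. Define the polynomial F(s,x,y,z) = (x² − s·z²)·∏_{r=3}^{2g+2}(x − a_r·z) − y²·z^{2g} on ℂ⁴. Then the set of points (s,x,y,z) with |s| ≤ ε and (x,y,z) ≠ (0,0,0) at which F and all four partial derivatives ∂F/∂s, ∂F/∂x, ∂F/∂y, ∂F/∂z vanish is exactly {(s, 0, y, 0) : |s| ≤ ε, y ∈ ℂ, y ≠ 0}. (Equivalently: the singular locus of Y_irr^{(0)} ⊂ D_ε × ℂP²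 is D_ε × {(0:1:0)}.) -/
/-- The singular locus of the local model `Y_irr^{(0)} ⊂ D_ε × ℂP²`, cut out by
`(x² − s z²)·∏_{r=3}^{2g+2}(x − a_r z) − y² z^{2g} = 0`, is `D_ε × {(0:1:0)}`:
the critical zeros with `|s| ≤ ε` and `(x,y,z) ≠ (0,0,0)` are exactly the
points `(s,0,y,0)` with `|s| ≤ ε` and `y ≠ 0`. -/
theorem stmt_2 (g : ℕ) (hg : 2 ≤ g) (ε : ℝ) (hε : 0 < ε) (a : ℕ → ℂ)
    (ha_inj : Set.InjOn a ↑(Finset.Icc 3 (2 * g + 2)))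
    (ha_abs : ∀ r ∈ Finset.Icc 3 (2 * g + 2), ε < ‖a r‖)
    (ha_abs2 : ∀ r ∈ Finset.Icc 3 (2 * g + 2), ε < ‖a r‖ ^ 2)
    (F : ℂ → ℂ → ℂ → ℂ → ℂ)
    (hF : ∀ s x y z, F s x y z =
      (x ^ 2 - s * z ^ 2) * (∏ r ∈ Finset.Icc 3 (2 * g + 2), (x - a r * z)) -
        y ^ 2 * z ^ (2 * g)) :
    ∀ s x y z : ℂ,
      (‖s‖ ≤ ε ∧ ¬(x = 0 ∧ y = 0 ∧ z = 0) ∧ F s x y z = 0 ∧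
        deriv (fun s' => F s' x y z) s = 0 ∧ deriv (fun x' => F s x' y z) x = 0 ∧
        deriv (fun y' => F s x y' z) y = 0 ∧ deriv (fun z' => F s x y z') z = 0) ↔
      (‖s‖ ≤ ε ∧ x = 0 ∧ z = 0 ∧ y ≠ 0) := by
  have h2g : 2 * g ≠ 0 := by omega
  have hcard : (Finset.Icc 3 (2 * g + 2)).card = 2 * g := by
    rw [Nat.card_Icc]; omega
  intro s x y z
  constructor
  · rintro ⟨hs, hnz, hF0, hds, hdx, hdy, hdz⟩
    by_cases hz : z = 0
    · subst hz
      -- F s x y 0 = x^(2g+2)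
      have hx : x = 0 := by
        rw [hF] at hF0
        simp only [Finset.prod_congr rfl (fun r _ => by ring : ∀ r ∈ Finset.Icc 3 (2*g+2), x - a r * (0:ℂ) = x)] at hF0
        rw [Finset.prod_const, hcard, zero_pow h2g] at hF0
        simp only [mul_zero, sub_zero] at hF0
        have : x ^ (2 + 2 * g) = 0 := by rw [pow_add]; simpa using hF0
        exact pow_eq_zero_iff (by omega) |>.mp this
      subst hx
      refine ⟨hs, rfl, rfl, ?_⟩
      intro hy; exact hnz ⟨rfl, hy, rfl⟩
    · exfalso
      -- deriv in s gives P = 0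
      have hfs : (fun s' => F s' x y z) =
          fun s' => (x ^ 2 - s' * z ^ 2) *
            (∏ r ∈ Finset.Icc 3 (2 * g + 2), (x - a r * z)) - y ^ 2 * z ^ (2 * g) :=
        funext fun s' => hF s' x y z
      have hds' : HasDerivAt (fun s' => (x ^ 2 - s' * z ^ 2) *
            (∏ r ∈ Finset.Icc 3 (2 * g + 2), (x - a r * z)) - y ^ 2 * z ^ (2 * g))
          (-(1 * z ^ 2) * (∏ r ∈ Finset.Icc 3 (2 * g + 2), (x - a r * z))) s :=
        (((hasDerivAt_id s).mul_const (z ^ 2)).const_sub (x ^ 2)).mul_const _ |>.sub_const _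
      rw [hfs, hds'.deriv] at hds
      have hP : (∏ r ∈ Finset.Icc 3 (2 * g + 2), (x - a r * z)) = 0 := by
        rcases mul_eq_zero.mp hds with h | h
        · exfalso; apply pow_ne_zero 2 hz; simpa using h
        · exact h
      obtain ⟨r, hr, hxr⟩ := Finset.prod_eq_zero_iff.mp hP
      have hxz : x = a r * z := by linear_combination hxr
      -- deriv in x
      have hprod : HasDerivAt (fun x' => ∏ i ∈ Finset.Icc 3 (2 * g + 2), (x' - a i * z))
          (∑ i ∈ Finset.Icc 3 (2 * g + 2),
            (∏ j ∈ (Finset.Icc 3 (2 * g + 2)).erase i, (x - a j * z)) • (1 : ℂ)) x :=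
        HasDerivAt.fun_finsetProd (fun i _ => (hasDerivAt_id x).sub_const (a i * z))
      have hfx : (fun x' => F s x' y z) =
          fun x' => (x' ^ 2 - s * z ^ 2) *
            (∏ r ∈ Finset.Icc 3 (2 * g + 2), (x' - a r * z)) - y ^ 2 * z ^ (2 * g) :=
        funext fun x' => hF s x' y z
      have hdx' : HasDerivAt (fun x' => (x' ^ 2 - s * z ^ 2) *
            (∏ r ∈ Finset.Icc 3 (2 * g + 2), (x' - a r * z)) - y ^ 2 * z ^ (2 * g))
          (((2 : ℕ) * x ^ (2 - 1)) * (∏ r ∈ Finset.Icc 3 (2 * g + 2), (x - a r * z)) +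
            (x ^ 2 - s * z ^ 2) * (∑ i ∈ Finset.Icc 3 (2 * g + 2),
              (∏ j ∈ (Finset.Icc 3 (2 * g + 2)).erase i, (x - a j * z)) • (1 : ℂ))) x :=
        (((hasDerivAt_pow 2 x).sub_const (s * z ^ 2)).mul hprod).sub_const _
      rw [hfx, hdx'.deriv, hP, mul_zero, zero_add] at hdx
      -- evaluate the sum
      have hsum : (∑ i ∈ Finset.Icc 3 (2 * g + 2),
          (∏ j ∈ (Finset.Icc 3 (2 * g + 2)).erase i, (x - a j * z)) • (1 : ℂ)) =
          ∏ j ∈ (Finset.Icc 3 (2 * g + 2)).erase r, (x - a j * z) := by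
        rw [Finset.sum_eq_single r]
        · simp
        · intro i hi hir
          have hrmem : r ∈ (Finset.Icc 3 (2 * g + 2)).erase i :=
            Finset.mem_erase.mpr ⟨Ne.symm hir, hr⟩
          rw [Finset.prod_eq_zero hrmem hxr]
          simp
        · intro h; exact absurd hr h
      rw [hsum] at hdx
      have h1 : x ^ 2 - s * z ^ 2 ≠ 0 := by
        rw [hxz]
        have hne : (a r) ^ 2 ≠ s := by
          intro h
          have := ha_abs2 r hr
          rw [← norm_pow, h] at this
          linarith
        intro h
        apply hne
        have hz2 : z ^ 2 ≠ 0 := pow_ne_zero _ hz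
        have h' : (a r ^ 2 - s) * z ^ 2 = 0 := by linear_combination h
        rcases mul_eq_zero.mp h' with h'' | h''
        · linear_combination h''
        · exact absurd h'' hz2
      have h2 : (∏ j ∈ (Finset.Icc 3 (2 * g + 2)).erase r, (x - a j * z)) ≠ 0 := by
        apply Finset.prod_ne_zero_iff.mpr
        intro j hj
        obtain ⟨hjr, hjm⟩ := Finset.mem_erase.mp hj
        rw [hxz]
        intro h
        have : a r = a j := by
          have := sub_eq_zero.mp h
          exact mul_right_cancel₀ hz this
        exact hjr (ha_inj hjm hr this.symm)
      exact mul_ne_zero h1 h2 hdx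
  · rintro ⟨hs, hx, hz, hy⟩
    subst hx; subst hz
    have hprod0 : ∀ x' : ℂ, (∏ r ∈ Finset.Icc 3 (2 * g + 2), (x' - a r * (0:ℂ))) =
        x' ^ (2 * g) := by
      intro x'
      rw [Finset.prod_congr rfl (fun r _ => by ring : ∀ r ∈ Finset.Icc 3 (2*g+2), x' - a r * (0:ℂ) = x'),
        Finset.prod_const, hcard]
    refine ⟨hs, fun h => hy h.2.1, ?_, ?_, ?_, ?_, ?_⟩
    · rw [hF, zero_pow h2g]; ring
    · have : (fun s' => F s' 0 y 0) = fun _ => (0 : ℂ) := by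
        funext s'
        rw [hF, zero_pow h2g]; ring
      rw [this, deriv_const]
    · have : (fun x' => F s x' y 0) = fun x' => x' ^ (2 + 2 * g) := by
        funext x'
        rw [hF, hprod0, zero_pow h2g, pow_add]; ring
      rw [this, deriv_pow_field]
      simp [zero_pow (by omega : 2 + 2 * g - 1 ≠ 0)]
    · have : (fun y' => F s 0 y' 0) = fun _ => (0 : ℂ) := by
        funext y'
        rw [hF, zero_pow h2g]; ring
      rw [this, deriv_const]
    · set C : ℂ := ∏ r ∈ Finset.Icc 3 (2 * g + 2), (-(a r)) with hC
      have hfz : (fun z' => F s 0 y z') =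
          fun z' => (-s * C) * z' ^ (2 * g + 2) - y ^ 2 * z' ^ (2 * g) := by
        funext z'
        rw [hF]
        have : (∏ r ∈ Finset.Icc 3 (2 * g + 2), ((0:ℂ) - a r * z')) = C * z' ^ (2 * g) := by
          rw [Finset.prod_congr rfl (fun r _ => by ring :
              ∀ r ∈ Finset.Icc 3 (2*g+2), (0:ℂ) - a r * z' = (-(a r)) * z'),
            Finset.prod_mul_distrib, Finset.prod_const, hcard, hC]
        rw [this]; ring
      have hd1 : HasDerivAt (fun z' : ℂ => (-s * C) * z' ^ (2 * g + 2) - y ^ 2 * z' ^ (2 * g))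
          ((-s * C) * ((2 * g + 2 : ℕ) * (0:ℂ) ^ (2 * g + 2 - 1)) -
            y ^ 2 * ((2 * g : ℕ) * (0:ℂ) ^ (2 * g - 1))) 0 :=
        ((hasDerivAt_pow (2 * g + 2) 0).const_mul _).sub ((hasDerivAt_pow (2 * g) 0).const_mul _)
      rw [hfz, hd1.deriv, zero_pow (by omega : 2 * g + 2 - 1 ≠ 0),
        zero_pow (by omega : 2 * g - 1 ≠ 0)]
      ring
end

section
/- Let g ≥ 2 and h ≥ 1 be integers with 2h ≤ g, let ε > 0, and let a_{2h+2}, …, a_{2g+2} be pairwise distinct complex numbers with |a_r| > ε and |a_r| > ε² for every r. Define the polynomial G(s,x,y,z) = (x^{2h+1} − s^{2(2h+1)}·z^{2h+1})·∏_{r=2h+2}^{2g+2}(x − a_r·z) − y²·z^{2g} on ℂ⁴. Then the set of points (s,x,y,z) with |s| ≤ ε and (x,y,z) ≠ (0,0,0) at which G and all four partial derivatives ∂G/∂s, ∂G/∂x, ∂G/∂y, ∂G/∂z vanish is exactly {(s, 0, y, 0) : |s| ≤ ε, y ≠ 0} ∪ {(0, 0, 0, z) : z ≠ 0}. (Equivalently: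 the singular locus of Y_{h,g−h}^{(0)} ⊂ D_ε × ℂP² is (D_ε × {(0:1:0)}) ∪ {(0,(0:0:1))}.) -/
/-- The singular locus of the local model `Y_{h,g−h}^{(0)} ⊂ D_ε × ℂP²`, cut
out by `(x^{2h+1} − s^{2(2h+1)} z^{2h+1})·∏_{r=2h+2}^{2g+2}(x − a_r z) − y² z^{2g} = 0`,
is `(D_ε × {(0:1:0)}) ∪ {(0,(0:0:1))}`. -/
theorem stmt_3 (g h : ℕ) (hg : 2 ≤ g) (hh : 1 ≤ h) (hhg : 2 * h ≤ g)
    (ε : ℝ) (hε : 0 < ε) (a : ℕ → ℂ)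
    (ha_inj : Set.InjOn a ↑(Finset.Icc (2 * h + 2) (2 * g + 2)))
    (ha_abs : ∀ r ∈ Finset.Icc (2 * h + 2) (2 * g + 2), ε < ‖a r‖)
    (ha_abs2 : ∀ r ∈ Finset.Icc (2 * h + 2) (2 * g + 2), ε ^ 2 < ‖a r‖)
    (G : ℂ → ℂ → ℂ → ℂ → ℂ)
    (hG : ∀ s x y z, G s x y z =
      (x ^ (2 * h + 1) - s ^ (2 * (2 * h + 1)) * z ^ (2 * h + 1)) *
        (∏ r ∈ Finset.Icc (2 * h + 2) (2 * g + 2), (x - a r * z)) -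
        y ^ 2 * z ^ (2 * g)) :
    ∀ s x y z : ℂ,
      (‖s‖ ≤ ε ∧ ¬(x = 0 ∧ y = 0 ∧ z = 0) ∧ G s x y z = 0 ∧
        deriv (fun s' => G s' x y z) s = 0 ∧ deriv (fun x' => G s x' y z) x = 0 ∧
        deriv (fun y' => G s x y' z) y = 0 ∧ deriv (fun z' => G s x y z') z = 0) ↔
      ((‖s‖ ≤ ε ∧ x = 0 ∧ z = 0 ∧ y ≠ 0) ∨
        (s = 0 ∧ x = 0 ∧ y = 0 ∧ z ≠ 0)) := by
  intro s x y z
  set S : Finset ℕ := Finset.Icc (2 * h + 2) (2 * g + 2) with hSdef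
  have hm0 : 2 * h + 1 ≠ 0 := by omega
  have hm1 : 2 * h + 1 - 1 ≠ 0 := by omega
  have hM0 : 2 * (2 * h + 1) ≠ 0 := by omega
  have hM1 : 2 * (2 * h + 1) - 1 ≠ 0 := by omega
  have hg0 : 2 * g ≠ 0 := by omega
  have hg1 : 2 * g - 1 ≠ 0 := by omega
  -- derivative in s
  have hds : ∀ s x y z : ℂ, HasDerivAt (fun s' => G s' x y z)
      (-((↑(2 * (2 * h + 1)) * s ^ (2 * (2 * h + 1) - 1)) * z ^ (2 * h + 1)) *
        ∏ r ∈ S, (x - a r * z)) s := by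
    intro s x y z
    have h1 := ((((hasDerivAt_pow (2 * (2 * h + 1)) s).mul_const
      (z ^ (2 * h + 1))).const_sub (x ^ (2 * h + 1))).mul_const
      (∏ r ∈ S, (x - a r * z))).sub_const (y ^ 2 * z ^ (2 * g))
    simpa only [← hG] using h1
  -- derivative in y
  have hdy : ∀ s x y z : ℂ, HasDerivAt (fun y' => G s x y' z)
      (-(((2 : ℕ) : ℂ) * y ^ (2 - 1) * z ^ (2 * g))) y := by
    intro s x y z
    have h1 := ((hasDerivAt_pow 2 y).mul_const (z ^ (2 * g))).const_sub
      ((x ^ (2 * h + 1) - s ^ (2 * (2 * h + 1)) * z ^ (2 * h + 1)) * ∏ r ∈ S, (x - a r * z))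
    simpa only [← hG] using h1
  -- derivative in x
  have hdx : ∀ s x y z : ℂ, HasDerivAt (fun x' => G s x' y z)
      ((↑(2 * h + 1) * x ^ (2 * h + 1 - 1)) * (∏ r ∈ S, (x - a r * z)) +
        (x ^ (2 * h + 1) - s ^ (2 * (2 * h + 1)) * z ^ (2 * h + 1)) *
          (∑ r ∈ S, (∏ j ∈ S.erase r, (x - a j * z)) • (1 : ℂ))) x := by
    intro s x y z
    have hp : HasDerivAt (fun x' : ℂ => ∏ r ∈ S, (x' - a r * z))
        (∑ r ∈ S, (∏ j ∈ S.erase r, (x - a j * z)) • (1 : ℂ)) x :=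
      HasDerivAt.fun_finsetProd (fun i _ => (hasDerivAt_id x).sub_const _)
    have h1 := (((hasDerivAt_pow (2 * h + 1) x).sub_const
      (s ^ (2 * (2 * h + 1)) * z ^ (2 * h + 1))).mul hp).sub_const (y ^ 2 * z ^ (2 * g))
    simpa only [← hG, Pi.mul_apply, Pi.sub_apply] using h1
  -- derivative in z
  have hdz : ∀ s x y z : ℂ, HasDerivAt (fun z' => G s x y z')
      (-(s ^ (2 * (2 * h + 1)) * (↑(2 * h + 1) * z ^ (2 * h + 1 - 1))) *
        (∏ r ∈ S, (x - a r * z)) +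
        (x ^ (2 * h + 1) - s ^ (2 * (2 * h + 1)) * z ^ (2 * h + 1)) *
          (∑ r ∈ S, (∏ j ∈ S.erase r, (x - a j * z)) • (-(a r * 1))) -
        y ^ 2 * (↑(2 * g) * z ^ (2 * g - 1))) z := by
    intro s x y z
    have hp : HasDerivAt (fun z' : ℂ => ∏ r ∈ S, (x - a r * z'))
        (∑ r ∈ S, (∏ j ∈ S.erase r, (x - a j * z)) • (-(a r * 1))) z :=
      HasDerivAt.fun_finsetProd (fun i _ => ((hasDerivAt_id z).const_mul (a i)).const_sub x)
    have h1 := ((((hasDerivAt_pow (2 * h + 1) z).const_mul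
      (s ^ (2 * (2 * h + 1)))).const_sub (x ^ (2 * h + 1))).mul hp).sub
      ((hasDerivAt_pow (2 * g) z).const_mul (y ^ 2))
    simpa only [← hG, Pi.mul_def, Pi.sub_def] using h1
  constructor
  · rintro ⟨habs, hnz, hG0, hds0, hdx0, hdy0, _⟩
    rw [hG s x y z] at hG0
    rw [(hds s x y z).deriv] at hds0
    rw [(hdx s x y z).deriv] at hdx0
    rw [(hdy s x y z).deriv] at hdy0
    have hyz : y = 0 ∨ z = 0 := by
      have h2 : y * z ^ (2 * g) = 0 := by
        have h := hdy0
        rw [neg_eq_zero] at h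
        rcases mul_eq_zero.mp h with hA | hA
        · rcases mul_eq_zero.mp hA with hB | hB
          · norm_num at hB
          · rw [pow_one] at hB; rw [hB, zero_mul]
        · rw [hA, mul_zero]
      rcases mul_eq_zero.mp h2 with h | h
      · exact Or.inl h
      · exact Or.inr (pow_eq_zero_iff hg0 |>.mp h)
    rcases eq_or_ne z 0 with hz | hz
    · -- z = 0 case
      subst hz
      left
      have hx : x = 0 := by
        simp only [mul_zero, sub_zero, zero_pow hm0, zero_pow hg0,
          Finset.prod_const] at hG0
        rcases mul_eq_zero.mp hG0 with h | h
        · exact pow_eq_zero_iff hm0 |>.mp h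
        · exact pow_eq_zero_iff (by
            rw [hSdef, Nat.card_Icc]; omega) |>.mp h
      refine ⟨habs, hx, rfl, fun hy => hnz ⟨hx, hy, rfl⟩⟩
    · -- z ≠ 0 case
      have hy : y = 0 := hyz.resolve_right hz
      subst hy
      rw [zero_pow (by norm_num : 2 ≠ 0), zero_mul, sub_zero] at hG0
      rcases eq_or_ne (∏ r ∈ S, (x - a r * z)) 0 with hP | hP
      · -- P = 0: contradiction
        exfalso
        obtain ⟨r, hrS, hr⟩ := Finset.prod_eq_zero_iff.mp hP
        have hx : x = a r * z := by linear_combination hr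
        have hane : x ^ (2 * h + 1) - s ^ (2 * (2 * h + 1)) * z ^ (2 * h + 1) ≠ 0 := by
          have habs2 : ‖s ^ 2‖ < ‖a r‖ := by
            calc ‖s ^ 2‖ = ‖s‖ ^ 2 := by rw [norm_pow]
            _ ≤ ε ^ 2 := pow_le_pow_left₀ (norm_nonneg s) habs 2
            _ < ‖a r‖ := ha_abs2 r hrS
          have h3 : (a r) ^ (2 * h + 1) ≠ (s ^ 2) ^ (2 * h + 1) := by
            intro he
            have := congrArg norm he
            rw [norm_pow, norm_pow] at this
            exact absurd this (ne_of_gt (pow_lt_pow_left₀ habs2 (norm_nonneg _) hm0))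
          intro he0
          apply h3
          have hzm : z ^ (2 * h + 1) ≠ 0 := pow_ne_zero _ hz
          have hkey : ((a r) ^ (2 * h + 1) - (s ^ 2) ^ (2 * h + 1)) * z ^ (2 * h + 1) = 0 := by
            rw [hx] at he0
            linear_combination he0
          rcases mul_eq_zero.mp hkey with h | h
          · linear_combination h
          · exact absurd h hzm
        have hsum : (∑ r' ∈ S, (∏ j ∈ S.erase r', (x - a j * z)) • (1 : ℂ)) =
            ∏ j ∈ S.erase r, (x - a j * z) := by
          rw [Finset.sum_eq_single r]
          · rw [smul_eq_mul, mul_one]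
          · intro r' hr'S hr'ne
            rw [smul_eq_mul, mul_one]
            exact Finset.prod_eq_zero (Finset.mem_erase.mpr ⟨hr'ne.symm, hrS⟩) hr
          · intro hc; exact absurd hrS hc
        have hQne : (∏ j ∈ S.erase r, (x - a j * z)) ≠ 0 := by
          rw [Finset.prod_ne_zero_iff]
          intro j hj
          have hjS : j ∈ S := Finset.mem_of_mem_erase hj
          have hjr : j ≠ r := Finset.ne_of_mem_erase hj
          have haje : a j ≠ a r := fun hc => hjr (ha_inj hjS hrS hc)
          rw [hx]
          intro hc
          have : (a r - a j) * z = 0 := by linear_combination hc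
          rcases mul_eq_zero.mp this with h | h
          · exact haje (by linear_combination -h)
          · exact hz h
        rw [hP, mul_zero, zero_add, hsum] at hdx0
        rcases mul_eq_zero.mp hdx0 with hA | hA
        · exact hane hA
        · exact hQne hA
      · -- P ≠ 0
        right
        have hxm : x ^ (2 * h + 1) = s ^ (2 * (2 * h + 1)) * z ^ (2 * h + 1) := by
          rcases mul_eq_zero.mp hG0 with hA | hA
          · linear_combination hA
          · exact absurd hA hP
        have hs0 : s = 0 := by
          have h2 : -((↑(2 * (2 * h + 1)) * s ^ (2 * (2 * h + 1) - 1)) * z ^ (2 * h + 1)) = 0 :=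
            by rcases mul_eq_zero.mp hds0 with hA | hA
               · exact hA
               · exact absurd hA hP
          rw [neg_eq_zero] at h2
          rcases mul_eq_zero.mp h2 with hA | hA
          · rcases mul_eq_zero.mp hA with hB | hB
            · exact absurd hB (by exact_mod_cast hM0)
            · exact pow_eq_zero_iff hM1 |>.mp hB
          · exact absurd hA (pow_ne_zero _ hz)
        have hx0 : x = 0 := by
          rw [hs0, zero_pow hM0, zero_mul] at hxm
          exact pow_eq_zero_iff hm0 |>.mp hxm
        exact ⟨hs0, hx0, rfl, hz⟩
  · rintro (⟨habs, hx, hz, hy⟩ | ⟨hs, hx, hy, hz⟩)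
    · subst hx; subst hz
      refine ⟨habs, fun hc => hy hc.2.1, ?_, ?_, ?_, ?_, ?_⟩
      · rw [hG]; simp [zero_pow hm0, zero_pow hg0]
      · rw [(hds s 0 y 0).deriv]; simp [zero_pow hm0]
      · rw [(hdx s 0 y 0).deriv]; simp [zero_pow hm0, zero_pow hm1]
        exact Or.inl (Or.inr (by exact_mod_cast (by omega : ¬ h = 0)))
      · rw [(hdy s 0 y 0).deriv]; simp [zero_pow hg0]
      · rw [(hdz s 0 y 0).deriv]; simp [zero_pow hm0, zero_pow hm1, zero_pow hg1]
        exact Or.inl (Or.inr (Or.inr (by exact_mod_cast (by omega : ¬ h = 0))))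
    · subst hs; subst hx; subst hy
      refine ⟨by simpa using le_of_lt hε, fun hc => hz hc.2.2, ?_, ?_, ?_, ?_, ?_⟩
      · rw [hG]; simp [zero_pow hm0, zero_pow hM0]
      · rw [(hds 0 0 0 z).deriv]; simp [zero_pow hM1]
      · rw [(hdx 0 0 0 z).deriv]; simp [zero_pow hm0, zero_pow hm1, zero_pow hM0]
        exact Or.inl (Or.inr (by exact_mod_cast (by omega : ¬ h = 0)))
      · rw [(hdy 0 0 0 z).deriv]; simp
      · rw [(hdz 0 0 0 z).deriv]; simp [zero_pow hm0, zero_pow hM0]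
end

section
/- Let g ≥ 2 and m ≥ 0 be integers and let a₃, …, a_{2g+2} be arbitrary complex numbers. Define the polynomial H_m(s,p,q) = p²·(1 − s·q²)·∏_{r=3}^{2g+2}(1 − a_r·q) − q^{2m} on ℂ³. Then: (i) if m ≥ 1, the set of points (s,p,q) ∈ ℂ³ at which H_m and all three partial derivatives ∂H_m/∂s, ∂H_m/∂p, ∂H_m/∂q vanish is exactly {(s, 0, 0) : s ∈ ℂ}; (ii) if m = 0, there is no point of ℂ³ at which H₀ and all three of its partial derivatives vanish. -/
lemma derivP_aux (C D p : ℂ) : deriv (fun p' : ℂ => p' ^ 2 * C - D) p = 2 * p * C := by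
  have h := ((hasDerivAt_pow 2 p).mul_const C).sub_const D
  simpa using h.deriv

/-- The proper transforms of `Y_irr^{(0)}` under successive blow-ups, given by
`p²(1 − s q²)∏_{r=3}^{2g+2}(1 − a_r q) − q^{2m} = 0`: the hypersurface is
singular exactly along `{(s,0,0)}` when `m ≥ 1`, and is smooth when `m = 0`. -/
theorem stmt_5 (g m : ℕ) (hg : 2 ≤ g) (a : ℕ → ℂ)
    (H : ℂ → ℂ → ℂ → ℂ)
    (hH : ∀ s p q, H s p q =
      p ^ 2 * (1 - s * q ^ 2) * (∏ r ∈ Finset.Icc 3 (2 * g + 2), (1 - a r * q)) -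
        q ^ (2 * m)) :
    (1 ≤ m → ∀ s p q : ℂ,
      (H s p q = 0 ∧ deriv (fun s' => H s' p q) s = 0 ∧
        deriv (fun p' => H s p' q) p = 0 ∧ deriv (fun q' => H s p q') q = 0) ↔
      (p = 0 ∧ q = 0)) ∧
    (m = 0 → ∀ s p q : ℂ,
      ¬(H s p q = 0 ∧ deriv (fun s' => H s' p q) s = 0 ∧
        deriv (fun p' => H s p' q) p = 0 ∧ deriv (fun q' => H s p q') q = 0)) := by
  have key : ∀ s p q : ℂ,
      deriv (fun p' => H s p' q) p =
        2 * p * ((1 - s * q ^ 2) * ∏ r ∈ Finset.Icc 3 (2 * g + 2), (1 - a r * q)) := by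
    intro s p q
    have hfp : (fun p' => H s p' q) = fun p' =>
        p' ^ 2 * ((1 - s * q ^ 2) * ∏ r ∈ Finset.Icc 3 (2 * g + 2), (1 - a r * q))
          - q ^ (2 * m) := by
      funext p'; rw [hH]; ring
    rw [hfp, derivP_aux]
  have pcsq : ∀ s p q : ℂ, H s p q = 0 → deriv (fun p' => H s p' q) p = 0 →
      q ^ (2 * m) = 0 := by
    intro s p q h0 hp
    rw [key] at hp
    set C : ℂ := (1 - s * q ^ 2) * ∏ r ∈ Finset.Icc 3 (2 * g + 2), (1 - a r * q) with hC
    have hpc : p ^ 2 * C = 0 := by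
      rcases mul_eq_zero.1 hp with h | h
      · rcases mul_eq_zero.1 h with h2 | h2
        · norm_num at h2
        · simp [h2]
      · simp [h]
    rw [hH] at h0
    linear_combination hpc - h0
  constructor
  · intro hm s p q
    have h2m : 2 * m ≠ 0 := by omega
    constructor
    · rintro ⟨h0, -, hp, -⟩
      have hq : q ^ (2 * m) = 0 := pcsq s p q h0 hp
      have hq0 : q = 0 := pow_eq_zero_iff h2m |>.1 hq
      subst hq0
      rw [hH] at h0
      simp [zero_pow h2m] at h0
      exact ⟨h0, rfl⟩
    · rintro ⟨hp0, hq0⟩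
      subst hp0; subst hq0
      refine ⟨?_, ?_, ?_, ?_⟩
      · rw [hH]; simp [zero_pow h2m]
      · have hf : (fun s' => H s' 0 0) = fun _ => (0 : ℂ) := by
          funext s'; rw [hH]; simp [zero_pow h2m]
        rw [hf]; simp
      · rw [key]; ring
      · have hf : (fun q' => H s 0 q') = fun q' => -(q' ^ (2 * m)) := by
          funext q'; rw [hH]; simp
        rw [hf]
        have h : deriv (fun q' : ℂ => -(q' ^ (2 * m))) 0 = -(((2 * m : ℕ) : ℂ) * 0 ^ (2 * m - 1)) :=
          ((hasDerivAt_pow (2 * m) (0 : ℂ)).neg).deriv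
        rw [h]
        simp [zero_pow (show 2 * m - 1 ≠ 0 by omega)]
  · intro hm s p q
    rintro ⟨h0, -, hp, -⟩
    have hq : q ^ (2 * m) = 0 := pcsq s p q h0 hp
    rw [hm] at hq
    simp at hq
end

section
/- Let h ≥ 1 and m ≥ 0 be integers, let δ > 0, and let a_{2h+2}, …, a_{2g+2} (for some integer g with 2h ≤ g) be pairwise distinct complex numbers with |a_r| > δ² for every r. Define the polynomial Q_m(t,u,v) = t^{2m}·(u^{2h+1} − 1)·∏_{r=2h+2}^{2g+2}(t²·u − a_r) − v² on ℂ³. Then: (i) if m ≥ 1, the set of points (t,u,v) with |t| ≤ δ at which Q_m and all three partial derivatives ∂Q_m/∂t, ∂Q_m/∂u, ∂Q_m/∂v vanish is exactly {(0, u, 0) : u ∈ ℂ}; (ii) if m = 0, there is no point (t,u,v) with |t| ≤ δ at which Q₀ and all three of its partial derivatives vanish. -/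
/-- The inductive claim governing the resolution of the reducible local model:
for `Q_m(t,u,v) = t^{2m}(u^{2h+1} − 1)∏_{r=2h+2}^{2g+2}(t²u − a_r) − v²`, in the
region `{|t| ≤ δ}` the critical zeros form exactly the line `{(0,u,0)}` when
`m ≥ 1`, and there are none when `m = 0`. -/
theorem stmt_8 (h g m : ℕ) (hh : 1 ≤ h) (hhg : 2 * h ≤ g)
    (δ : ℝ) (hδ : 0 < δ) (a : ℕ → ℂ)
    (ha_inj : Set.InjOn a ↑(Finset.Icc (2 * h + 2) (2 * g + 2)))
    (ha_abs : ∀ r ∈ Finset.Icc (2 * h + 2) (2 * g + 2), δ ^ 2 < ‖a r‖)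
    (Q : ℂ → ℂ → ℂ → ℂ)
    (hQ : ∀ t u v, Q t u v =
      t ^ (2 * m) * (u ^ (2 * h + 1) - 1) *
        (∏ r ∈ Finset.Icc (2 * h + 2) (2 * g + 2), (t ^ 2 * u - a r)) - v ^ 2) :
    (1 ≤ m → ∀ t u v : ℂ,
      (‖t‖ ≤ δ ∧ Q t u v = 0 ∧ deriv (fun t' => Q t' u v) t = 0 ∧
        deriv (fun u' => Q t u' v) u = 0 ∧ deriv (fun v' => Q t u v') v = 0) ↔
      (t = 0 ∧ v = 0)) ∧
    (m = 0 → ∀ t u v : ℂ, ‖t‖ ≤ δ →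
      ¬(Q t u v = 0 ∧ deriv (fun t' => Q t' u v) t = 0 ∧
        deriv (fun u' => Q t u' v) u = 0 ∧ deriv (fun v' => Q t u v') v = 0)) := by
  set s : Finset ℕ := Finset.Icc (2 * h + 2) (2 * g + 2) with hs
  -- derivative in u
  have hder_u : ∀ t u v : ℂ, deriv (fun u' => Q t u' v) u =
      (t ^ (2*m) * (((2*h+1:ℕ):ℂ) * u ^ (2*h))) * (∏ r ∈ s, (t^2*u - a r))
        + (t ^ (2*m) * (u ^ (2*h+1) - 1)) *
          (∑ r ∈ s, (∏ j ∈ s.erase r, (t^2*u - a j)) * t^2) := by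
    intro t u v
    have hA : HasDerivAt (fun u' : ℂ => u' ^ (2*h+1) - 1) (((2*h+1:ℕ):ℂ) * u ^ (2*h)) u := by
      simpa using (hasDerivAt_pow (2*h+1) u).sub_const 1
    have hB : HasDerivAt (fun u' : ℂ => ∏ r ∈ s, (t ^ 2 * u' - a r))
        (∑ r ∈ s, (∏ j ∈ s.erase r, (t^2*u - a j)) * t^2) u := by
      have := HasDerivAt.fun_finsetProd (𝕜 := ℂ) (x := u) (u := s)
        (f := fun r u' => t ^ 2 * u' - a r) (f' := fun _ => t ^ 2)
        (fun r _ => by simpa using ((hasDerivAt_id u).const_mul (t^2)).sub_const (a r))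
      simpa [smul_eq_mul] using this
    have hfun : (fun u' => Q t u' v) = fun u' : ℂ =>
        t ^ (2*m) * (u' ^ (2*h+1) - 1) * (∏ r ∈ s, (t ^ 2 * u' - a r)) - v ^ 2 :=
      funext fun u' => hQ t u' v
    rw [hfun]
    exact (((hA.const_mul (t ^ (2*m))).mul hB).sub_const (v ^ 2)).deriv
  -- derivative in v
  have hder_v : ∀ t u v : ℂ, deriv (fun v' => Q t u v') v = -(2*v) := by
    intro t u v
    have hfun : (fun v' => Q t u v') = fun v' : ℂ =>
        t ^ (2*m) * (u ^ (2*h+1) - 1) * (∏ r ∈ s, (t ^ 2 * u - a r)) - v' ^ 2 :=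
      funext fun v' => hQ t u v'
    rw [hfun]
    have := (((hasDerivAt_pow 2 v)).const_sub
      (t ^ (2*m) * (u ^ (2*h+1) - 1) * (∏ r ∈ s, (t ^ 2 * u - a r)))).deriv
    rw [this]; ring
  -- factors are nonzero when |t| ≤ δ and |u| ≤ 1
  have hfac : ∀ t u : ℂ, ‖t‖ ≤ δ → ‖u‖ ≤ 1 →
      ∀ r ∈ s, t ^ 2 * u - a r ≠ 0 := by
    intro t u ht hu r hr heq
    rw [sub_eq_zero] at heq
    have h1 : ‖t ^ 2 * u‖ ≤ δ ^ 2 := by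
      rw [norm_mul, norm_pow]
      have h0 := norm_nonneg t
      have h0u := norm_nonneg u
      nlinarith
    rw [heq] at h1
    linarith [ha_abs r hr]
  -- central claim
  have claim : ∀ t u : ℂ, ‖t‖ ≤ δ →
      (u ^ (2*h+1) - 1) * (∏ r ∈ s, (t^2*u - a r)) = 0 →
      (((2*h+1:ℕ):ℂ) * u ^ (2*h)) * (∏ r ∈ s, (t^2*u - a r))
        + (u ^ (2*h+1) - 1) * (∑ r ∈ s, (∏ j ∈ s.erase r, (t^2*u - a j)) * t^2) = 0 →
      False := by
    intro t u ht hP0 hD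
    rcases mul_eq_zero.mp hP0 with hu1 | hP
    · -- u^(2h+1) = 1
      have hu1' : u ^ (2*h+1) = 1 := by rwa [sub_eq_zero] at hu1
      have habs : ‖u‖ = 1 := by
        have h1 : ‖u‖ ^ (2*h+1) = 1 := by
          rw [← norm_pow, hu1', norm_one]
        rcases lt_trichotomy (‖u‖) 1 with hlt | he | hgt
        · have := pow_lt_one₀ (norm_nonneg u) hlt (by omega : 2*h+1 ≠ 0)
          rw [h1] at this; exact absurd this (lt_irrefl 1)
        · exact he
        · have := one_lt_pow₀ hgt (by omega : 2*h+1 ≠ 0)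
          rw [h1] at this; exact absurd this (lt_irrefl 1)
      have hPne : (∏ r ∈ s, (t^2*u - a r)) ≠ 0 :=
        Finset.prod_ne_zero_iff.mpr (hfac t u ht (le_of_eq habs))
      have hune : u ≠ 0 := by
        intro hc; rw [hc] at habs; simp at habs
      rw [hu1] at hD
      simp only [zero_mul, add_zero] at hD
      exact (mul_ne_zero (mul_ne_zero (by exact_mod_cast (by omega : (2*h+1:ℕ) ≠ 0))
        (pow_ne_zero _ hune)) hPne) hD
    · -- some factor vanishes
      obtain ⟨r0, hr0s, hr0⟩ := Finset.prod_eq_zero_iff.mp hP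
      have heq : t ^ 2 * u = a r0 := by rwa [sub_eq_zero] at hr0
      have hugt : 1 < ‖u‖ := by
        by_contra hc
        exact hfac t u ht (not_lt.mp hc) r0 hr0s hr0
      have hune : u ^ (2*h+1) - 1 ≠ 0 := by
        intro hc
        rw [sub_eq_zero] at hc
        have h1 : ‖u‖ ^ (2*h+1) = 1 := by
          rw [← norm_pow, hc, norm_one]
        have := one_lt_pow₀ hugt (by omega : 2*h+1 ≠ 0)
        rw [h1] at this; exact absurd this (lt_irrefl 1)
      have ht0 : t ≠ 0 := by
        rintro rfl
        have h0 : a r0 = 0 := by rw [← heq]; ring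
        have h1 := ha_abs r0 hr0s
        rw [h0, norm_zero] at h1
        nlinarith
      have hsum : (∑ r ∈ s, (∏ j ∈ s.erase r, (t^2*u - a j)) * t^2)
          = (∏ j ∈ s.erase r0, (t^2*u - a j)) * t^2 := by
        apply Finset.sum_eq_single_of_mem r0 hr0s
        intro r hrs hne
        rw [Finset.prod_eq_zero (Finset.mem_erase.mpr ⟨hne.symm, hr0s⟩) hr0, zero_mul]
      have hprodne : (∏ j ∈ s.erase r0, (t^2*u - a j)) ≠ 0 := by
        apply Finset.prod_ne_zero_iff.mpr
        intro j hj hc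
        have hjs := Finset.mem_of_mem_erase hj
        rw [sub_eq_zero] at hc
        have : a j = a r0 := by rw [← hc, heq]
        exact (Finset.mem_erase.mp hj).1
          (ha_inj (Finset.mem_coe.mpr hjs) (Finset.mem_coe.mpr hr0s) this)
      rw [hP, hsum] at hD
      simp only [mul_zero, zero_add] at hD
      exact (mul_ne_zero hune (mul_ne_zero hprodne (pow_ne_zero _ ht0))) hD
  constructor
  · intro hm t u v
    constructor
    · rintro ⟨ht, hQ0, _, hdu, hdv⟩
      have hv : v = 0 := by
        rw [hder_v t u v] at hdv
        exact (mul_eq_zero.mp (neg_eq_zero.mp hdv)).resolve_left two_ne_zero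
      refine ⟨?_, hv⟩
      by_contra ht0
      have hQ0' : t ^ (2*m) * ((u ^ (2*h+1) - 1) * (∏ r ∈ s, (t^2*u - a r))) = 0 := by
        rw [hQ t u v, hv] at hQ0
        calc t ^ (2*m) * ((u ^ (2*h+1) - 1) * (∏ r ∈ s, (t^2*u - a r)))
            = t ^ (2 * m) * (u ^ (2 * h + 1) - 1) * (∏ r ∈ s, (t ^ 2 * u - a r)) - 0 ^ 2 := by
              ring
          _ = 0 := hQ0
      have hPz : (u ^ (2*h+1) - 1) * (∏ r ∈ s, (t^2*u - a r)) = 0 :=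
        (mul_eq_zero.mp hQ0').resolve_left (pow_ne_zero _ ht0)
      rw [hder_u t u v] at hdu
      have hdu' : t ^ (2*m) * ((((2*h+1:ℕ):ℂ) * u ^ (2*h)) * (∏ r ∈ s, (t^2*u - a r))
          + (u ^ (2*h+1) - 1) * (∑ r ∈ s, (∏ j ∈ s.erase r, (t^2*u - a j)) * t^2)) = 0 := by
        rw [← hdu]; ring
      have hD := (mul_eq_zero.mp hdu').resolve_left (pow_ne_zero _ ht0)
      exact claim t u ht hPz hD
    · rintro ⟨rfl, rfl⟩
      have hm2 : (0:ℂ) ^ (2*m) = 0 := zero_pow (by omega)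
      have hm1 : (0:ℂ) ^ (2*m-1) = 0 := zero_pow (by omega)
      refine ⟨by simpa using le_of_lt hδ, by rw [hQ]; rw [hm2]; ring, ?_, ?_, ?_⟩
      · -- deriv in t at 0
        have hfun : (fun t' => Q t' u 0) = fun t' : ℂ =>
            t' ^ (2*m) * (u ^ (2*h+1) - 1) * (∏ r ∈ s, (t' ^ 2 * u - a r)) - (0:ℂ) ^ 2 :=
          funext fun t' => hQ t' u 0
        have hB : HasDerivAt (fun t' : ℂ => ∏ r ∈ s, (t' ^ 2 * u - a r))
            (∑ r ∈ s, (∏ j ∈ s.erase r, ((0:ℂ)^2*u - a j)) • ((2:ℕ) * (0:ℂ) ^ (2-1) * u)) 0 :=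
          HasDerivAt.fun_finsetProd (𝕜 := ℂ) (x := (0:ℂ)) (u := s)
            (f := fun r t' => t' ^ 2 * u - a r) (f' := fun _ => (2:ℕ) * (0:ℂ) ^ (2-1) * u)
            (fun r _ => ((hasDerivAt_pow 2 (0:ℂ)).mul_const u).sub_const (a r))
        have hT : HasDerivAt (fun t' : ℂ => t' ^ (2*m) * (u ^ (2*h+1) - 1))
            ((2*m:ℕ) * (0:ℂ) ^ (2*m-1) * (u ^ (2*h+1) - 1)) 0 :=
          (hasDerivAt_pow (2*m) 0).mul_const _
        rw [hfun, ((hT.fun_mul hB).sub_const ((0:ℂ) ^ 2)).deriv]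
        rw [hm1, hm2]
        ring
      · rw [hder_u 0 u 0, hm2]; ring
      · rw [hder_v 0 u 0]; ring
  · intro hm t u v ht
    rintro ⟨hQ0, _, hdu, hdv⟩
    have hv : v = 0 := by
      rw [hder_v t u v] at hdv
      exact (mul_eq_zero.mp (neg_eq_zero.mp hdv)).resolve_left two_ne_zero
    subst hm
    have hpow : t ^ (2*0) = 1 := by norm_num
    have hPz : (u ^ (2*h+1) - 1) * (∏ r ∈ s, (t^2*u - a r)) = 0 := by
      rw [hQ t u v, hv, hpow] at hQ0
      calc (u ^ (2*h+1) - 1) * (∏ r ∈ s, (t^2*u - a r))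
          = 1 * (u ^ (2 * h + 1) - 1) * (∏ r ∈ s, (t ^ 2 * u - a r)) - 0 ^ 2 := by ring
        _ = 0 := hQ0
    rw [hder_u t u v, hpow] at hdu
    have hD : (((2*h+1:ℕ):ℂ) * u ^ (2*h)) * (∏ r ∈ s, (t^2*u - a r))
        + (u ^ (2*h+1) - 1) * (∑ r ∈ s, (∏ j ∈ s.erase r, (t^2*u - a j)) * t^2) = 0 := by
      rw [← hdu]; ring
    exact claim t u ht hPz hD
end

section
/- Let g ≥ 1 be an integer and let c be a complex number with c ≠ 0 and |c| ≠ 1. Define the homogeneous polynomial F(x,y,z) = (x² − c·z²)·(x^{2g} − z^{2g}) − y²·z^{2g} on ℂ³. Then the set of points (x,y,z) ≠ (0,0,0) at which F and all three partial derivatives ∂F/∂x, ∂F/∂y, ∂F/∂z vanish is exactly {(0, y, 0) : y ∈ ℂ, y ≠ 0}. (Equivalently: the projective plane curve {(x:y:z) ∈ ℂP² : (x² − c z²)(x^{2g} − z^{2g}) = y² z^{2g}} has exactly one singular point, namely (0:1:0); in particular its affine part in the chart z = 1 is a smooth curve.) -/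
lemma deriv_x (g : ℕ) (c y z x : ℂ) :
    deriv (fun x' : ℂ => (x' ^ 2 - c * z ^ 2) * (x' ^ (2 * g) - z ^ (2 * g)) - y ^ 2 * z ^ (2 * g)) x
      = 2 * x * (x ^ (2 * g) - z ^ (2 * g)) + (x ^ 2 - c * z ^ 2) * ((2 * g) * x ^ (2 * g - 1)) := by
  have h1 := (hasDerivAt_pow 2 x).sub_const (c * z ^ 2)
  have h2 := (hasDerivAt_pow (2 * g) x).sub_const (z ^ (2 * g))
  have h := (h1.mul h2).sub_const (y ^ 2 * z ^ (2 * g))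
  refine h.deriv.trans ?_
  push_cast
  ring

lemma deriv_y (g : ℕ) (c x z y : ℂ) :
    deriv (fun y' : ℂ => (x ^ 2 - c * z ^ 2) * (x ^ (2 * g) - z ^ (2 * g)) - y' ^ 2 * z ^ (2 * g)) y
      = -(2 * y * z ^ (2 * g)) := by
  have h := (((hasDerivAt_pow 2 y).mul_const (z ^ (2 * g))).const_sub
    ((x ^ 2 - c * z ^ 2) * (x ^ (2 * g) - z ^ (2 * g))))
  rw [h.deriv]
  push_cast
  ring

lemma deriv_z (g : ℕ) (c x y z : ℂ) :
    deriv (fun z' : ℂ => (x ^ 2 - c * z' ^ 2) * (x ^ (2 * g) - z' ^ (2 * g)) - y ^ 2 * z' ^ (2 * g)) z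
      = -(c * (2 * z)) * (x ^ (2 * g) - z ^ (2 * g))
        + (x ^ 2 - c * z ^ 2) * (-((2 * g) * z ^ (2 * g - 1)))
        - y ^ 2 * ((2 * g) * z ^ (2 * g - 1)) := by
  have h1 := ((hasDerivAt_pow 2 z).const_mul c).const_sub (x ^ 2)
  have h2 := (hasDerivAt_pow (2 * g) z).const_sub (x ^ (2 * g))
  have h3 := (hasDerivAt_pow (2 * g) z).const_mul (y ^ 2)
  have h := (h1.mul h2).sub h3
  refine h.deriv.trans ?_
  push_cast
  ring

lemma key (g : ℕ) (hg : 1 ≤ g) (c x z : ℂ) (hc1 : ‖c‖ ≠ 1) (hz : z ≠ 0)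
    (h1 : x ^ 2 = c * z ^ 2) (h2 : x ^ (2 * g) = z ^ (2 * g)) : False := by
  have ha : ‖x‖ ^ (2 * g) = ‖z‖ ^ (2 * g) := by
    rw [← norm_pow, ← norm_pow, h2]
  have hxz : ‖x‖ = ‖z‖ := by
    rcases lt_trichotomy (‖x‖) (‖z‖) with h | h | h
    · exact absurd ha (ne_of_lt (pow_lt_pow_left₀ h (norm_nonneg x) (by omega)))
    · exact h
    · exact absurd ha.symm (ne_of_lt (pow_lt_pow_left₀ h (norm_nonneg z) (by omega)))
  have hb : ‖x‖ ^ 2 = ‖c‖ * ‖z‖ ^ 2 := by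
    rw [← norm_pow, h1, norm_mul, norm_pow]
  have hz' : ‖z‖ ≠ 0 := by simpa using hz
  rw [hxz] at hb
  apply hc1
  have h3 : ‖c‖ * ‖z‖ ^ 2 = 1 * ‖z‖ ^ 2 := by
    rw [one_mul]; exact hb.symm
  exact mul_right_cancel₀ (pow_ne_zero 2 hz') h3

/-- Each fiber of the twisted local model, the projective plane curve
`(x² − c z²)(x^{2g} − z^{2g}) = y² z^{2g}` with `c ≠ 0`, `|c| ≠ 1`, has exactly
one singular point, namely `(0:1:0)`: the critical zeros of the defining
homogeneous polynomial away from the origin are exactly `(0,y,0)`, `y ≠ 0`. -/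
theorem stmt_9 (g : ℕ) (hg : 1 ≤ g) (c : ℂ) (hc : c ≠ 0)
    (hc1 : ‖c‖ ≠ 1)
    (F : ℂ → ℂ → ℂ → ℂ)
    (hF : ∀ x y z, F x y z =
      (x ^ 2 - c * z ^ 2) * (x ^ (2 * g) - z ^ (2 * g)) - y ^ 2 * z ^ (2 * g)) :
    ∀ x y z : ℂ,
      (¬(x = 0 ∧ y = 0 ∧ z = 0) ∧ F x y z = 0 ∧
        deriv (fun x' => F x' y z) x = 0 ∧ deriv (fun y' => F x y' z) y = 0 ∧
        deriv (fun z' => F x y z') z = 0) ↔ (x = 0 ∧ z = 0 ∧ y ≠ 0) := by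
  intro x y z
  have h2g : (2 * g) ≠ 0 := by omega
  constructor
  · rintro ⟨hne, hF0, hdx, hdy, hdz⟩
    simp only [hF] at hF0 hdx hdy hdz
    rw [deriv_x] at hdx
    rw [deriv_y] at hdy
    rw [deriv_z] at hdz
    by_cases hz : z = 0
    · subst hz
      rw [zero_pow h2g] at hF0
      have hx : x = 0 := by
        have : x ^ 2 * x ^ (2 * g) = 0 := by linear_combination hF0
        rcases mul_eq_zero.mp this with h | h
        · exact pow_eq_zero_iff (n := 2) (by norm_num) |>.mp h
        · exact pow_eq_zero_iff h2g |>.mp h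
      subst hx
      refine ⟨rfl, rfl, ?_⟩
      intro hy
      exact hne ⟨rfl, hy, rfl⟩
    · exfalso
      have hy : y = 0 := by
        have : y * z ^ (2 * g) = 0 := by linear_combination -hdy / 2
        rcases mul_eq_zero.mp this with h | h
        · exact h
        · exact absurd (pow_eq_zero_iff h2g |>.mp h) hz
      subst hy
      have hF0' : (x ^ 2 - c * z ^ 2) * (x ^ (2 * g) - z ^ (2 * g)) = 0 := by
        linear_combination hF0
      rcases mul_eq_zero.mp hF0' with hA | hB
      · -- x^2 = c z^2
        have h1 : x ^ 2 = c * z ^ 2 := by linear_combination hA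
        have hx : x ≠ 0 := by
          intro hx0; subst hx0
          simp only [ne_eq, zero_pow, OfNat.ofNat_ne_zero, not_false_eq_true] at h1
          exact hz (pow_eq_zero_iff (n := 2) (by norm_num) |>.mp
            ((mul_eq_zero.mp h1.symm).resolve_left hc))
        have h2 : x ^ (2 * g) = z ^ (2 * g) := by
          have hxP : x * (x ^ (2 * g) - z ^ (2 * g)) = 0 := by
            linear_combination hdx / 2 - ((g : ℂ) * x ^ (2 * g - 1)) * hA
          have := (mul_eq_zero.mp hxP).resolve_left hx
          linear_combination this
        exact key g hg c x z hc1 hz h1 h2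
      · have h2 : x ^ (2 * g) = z ^ (2 * g) := by linear_combination hB
        have hx : x ≠ 0 := by
          intro hx0; subst hx0
          rw [zero_pow h2g] at h2
          exact hz (pow_eq_zero_iff h2g |>.mp h2.symm)
        have h1 : x ^ 2 = c * z ^ 2 := by
          have hQD : (x ^ 2 - c * z ^ 2) * (2 * (g : ℂ) * x ^ (2 * g - 1)) = 0 := by
            linear_combination hdx - 2 * x * hB
          have hne1 : (2 * (g : ℂ) * x ^ (2 * g - 1)) ≠ 0 := by
            apply mul_ne_zero (mul_ne_zero two_ne_zero ?_) (pow_ne_zero _ hx)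
            exact_mod_cast (Nat.cast_ne_zero (R := ℂ)).mpr (by omega : g ≠ 0)
          have := (mul_eq_zero.mp hQD).resolve_right hne1
          linear_combination this
        exact key g hg c x z hc1 hz h1 h2
  · rintro ⟨hx, hz, hy⟩
    subst hx; subst hz
    refine ⟨fun h => hy h.2.1, ?_, ?_, ?_, ?_⟩
    · rw [hF]; rw [zero_pow h2g]; ring
    · simp only [hF]; rw [deriv_x, zero_pow h2g]
      rw [zero_pow (by omega : 2 * g - 1 ≠ 0)]; ring
    · simp only [hF]; rw [deriv_y, zero_pow h2g]; ring
    · simp only [hF]; rw [deriv_z, zero_pow h2g]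
      rw [zero_pow (by omega : 2 * g - 1 ≠ 0)]; ring
end

section
/- Let K > 0 be a real number and let ω : ℂ² × ℂ² → ℝ be an ℝ-bilinear alternating form such that ω(w, i·w) > 0 for every nonzero w ∈ ℂ². Let g : ℝ × ℂ² → ℂ be continuously differentiable (as a map of real manifolds) such that for each fixed t ∈ ℝ the map w ↦ g(t,w) is holomorphic on ℂ². Define G : ℝ × ℝ × ℂ² → ℂ by G(t,θ,w) = g(t,w), and define the alternating ℝ-bilinear form Ω on the real vector space V = ℝ × ℝ × ℂ² by Ω((a₁,b₁,w₁),(a₂,b₂,w₂)) = K·(a₁b₂ − a₂b₁) + ω(w₁,w₂). Suppose p = (t₀,θ₀,w₀) ∈ V satisfies g(t₀,w₀) = 0 and the complex derivative of w ↦ g(t₀,w) at w₀ is nonzero (as a ℂ-linear map ℂ² → ℂ). Then the kernel of the real Fréchet derivative of G at p is a 4-dimensional real subspace of V, and the restriction of Ω to this kernel is a nondegenerate bilinear form. -/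
/-- Analytic core of Lemma 4.2: if `g(t,w)` is `C¹` in `(t,w)`, holomorphic in
`w ∈ ℂ²` for each fixed `t`, and `G(t,θ,w) = g(t,w)` is independent of `θ`,
then at a point where `g = 0` and the complex derivative in `w` is nonzero,
the kernel of the real derivative of `G` is a `4`-dimensional real subspace on
which the form `Ω = K dt∧dθ + ω` restricts nondegenerately, where `ω` is an
alternating ℝ-bilinear form on `ℂ²` taming the complex structure and `K > 0`. -/
theorem stmt_10 (K : ℝ) (hK : 0 < K)
    (ω : (ℂ × ℂ) →ₗ[ℝ] (ℂ × ℂ) →ₗ[ℝ] ℝ)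
    (hω_alt : ∀ w : ℂ × ℂ, ω w w = 0)
    (hω_tame : ∀ w : ℂ × ℂ, w ≠ 0 → 0 < ω w (Complex.I • w))
    (g : ℝ → (ℂ × ℂ) → ℂ)
    (hg_C1 : ContDiff ℝ 1 (fun p : ℝ × (ℂ × ℂ) => g p.1 p.2))
    (hg_hol : ∀ t : ℝ, Differentiable ℂ (g t))
    (G : ℝ × ℝ × (ℂ × ℂ) → ℂ)
    (hG : ∀ (t θ : ℝ) (w : ℂ × ℂ), G (t, θ, w) = g t w)
    (Ω : (ℝ × ℝ × (ℂ × ℂ)) → (ℝ × ℝ × (ℂ × ℂ)) → ℝ)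
    (hΩ : ∀ (a₁ b₁ : ℝ) (w₁ : ℂ × ℂ) (a₂ b₂ : ℝ) (w₂ : ℂ × ℂ),
      Ω (a₁, b₁, w₁) (a₂, b₂, w₂) = K * (a₁ * b₂ - a₂ * b₁) + ω w₁ w₂)
    (t₀ θ₀ : ℝ) (w₀ : ℂ × ℂ)
    (hzero : g t₀ w₀ = 0)
    (hreg : fderiv ℂ (g t₀) w₀ ≠ 0) :
    Module.finrank ℝ (LinearMap.ker (fderiv ℝ G (t₀, θ₀, w₀) : ℝ × ℝ × (ℂ × ℂ) →ₗ[ℝ] ℂ)) = 4 ∧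
      ∀ x ∈ LinearMap.ker (fderiv ℝ G (t₀, θ₀, w₀) : ℝ × ℝ × (ℂ × ℂ) →ₗ[ℝ] ℂ),
        (∀ y ∈ LinearMap.ker (fderiv ℝ G (t₀, θ₀, w₀) : ℝ × ℝ × (ℂ × ℂ) →ₗ[ℝ] ℂ), Ω x y = 0) → x = 0 := by
  classical
  set F : ℝ × (ℂ × ℂ) → ℂ := fun q => g q.1 q.2 with hFdef
  set L : (ℝ × ℝ × (ℂ × ℂ)) →L[ℝ] ℝ × (ℂ × ℂ) :=
    (ContinuousLinearMap.fst ℝ ℝ (ℝ × (ℂ × ℂ))).prod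
      ((ContinuousLinearMap.snd ℝ ℝ (ℂ × ℂ)).comp
        (ContinuousLinearMap.snd ℝ ℝ (ℝ × (ℂ × ℂ)))) with hL
  have hFdiff : DifferentiableAt ℝ F (t₀, w₀) := (hg_C1.differentiable one_ne_zero) _
  set A : (ℝ × (ℂ × ℂ)) →L[ℝ] ℂ := fderiv ℝ F (t₀, w₀) with hA
  set D : (ℂ × ℂ) →L[ℂ] ℂ := fderiv ℂ (g t₀) w₀ with hD
  -- derivative of G
  have hGF : G = F ∘ L := by
    funext q
    obtain ⟨t, θ, w⟩ := q
    simpa [hFdef, hL] using hG t θ w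
  have hDG : fderiv ℝ G (t₀, θ₀, w₀) = A.comp L := by
    have h1 : HasFDerivAt F A (L (t₀, θ₀, w₀)) := hFdiff.hasFDerivAt
    have h2 := h1.comp (t₀, θ₀, w₀) L.hasFDerivAt
    rw [hGF]
    exact h2.fderiv
  -- partial derivative in w
  have hA0 : ∀ u : ℂ × ℂ, A (0, u) = D u := by
    have hJ : HasFDerivAt (fun w : ℂ × ℂ => (t₀, w))
        (ContinuousLinearMap.inr ℝ ℝ (ℂ × ℂ)) w₀ :=
      HasFDerivAt.prodMk (hasFDerivAt_const t₀ w₀) (hasFDerivAt_id w₀)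
    have h1 : HasFDerivAt (g t₀) (A.comp (ContinuousLinearMap.inr ℝ ℝ (ℂ × ℂ))) w₀ :=
      hFdiff.hasFDerivAt.comp w₀ hJ
    have h2 : HasFDerivAt (g t₀) (D.restrictScalars ℝ) w₀ :=
      ((hg_hol t₀) w₀).hasFDerivAt.restrictScalars ℝ
    have heq := h1.unique h2
    intro u
    have := congrFun (congrArg (fun f : (ℂ × ℂ) →L[ℝ] ℂ => (f : (ℂ × ℂ) → ℂ)) heq) u
    simpa using this
  set τ : ℂ := A (1, 0) with hτ
  have hAsplit : ∀ (a : ℝ) (u : ℂ × ℂ), A (a, u) = a • τ + D u := by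
    intro a u
    have h : ((a : ℝ), u) = a • ((1 : ℝ), (0 : ℂ × ℂ)) + ((0 : ℝ), u) := by
      simp [Prod.ext_iff]
    rw [h, map_add, map_smul, hA0]
  have hmem : ∀ (a b : ℝ) (u : ℂ × ℂ),
      (a, b, u) ∈ LinearMap.ker (fderiv ℝ G (t₀, θ₀, w₀) : ℝ × ℝ × (ℂ × ℂ) →ₗ[ℝ] ℂ) ↔ a • τ + D u = 0 := by
    intro a b u
    rw [LinearMap.mem_ker, hDG]
    show A (a, u) = 0 ↔ _
    rw [hAsplit]
  -- surjectivity of D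
  obtain ⟨u₀, hu₀⟩ : ∃ u, D u ≠ 0 := by
    by_contra h
    push_neg at h
    exact hreg (ContinuousLinearMap.ext h)
  have hDsurj : ∀ c : ℂ, ∃ u, D u = c := fun c =>
    ⟨(c / D u₀) • u₀, by rw [map_smul, smul_eq_mul, div_mul_cancel₀ _ hu₀]⟩
  -- surjectivity of fderiv G
  have hsurj : Function.Surjective (fderiv ℝ G (t₀, θ₀, w₀)) := by
    intro c
    obtain ⟨u, hu⟩ := hDsurj c
    refine ⟨(0, 0, u), ?_⟩
    rw [hDG]
    show A (0, u) = c
    rw [hA0, hu]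
  constructor
  · -- dimension count
    have hrange : LinearMap.range (fderiv ℝ G (t₀, θ₀, w₀) : ℝ × ℝ × (ℂ × ℂ) →ₗ[ℝ] ℂ) = ⊤ :=
      LinearMap.range_eq_top.mpr hsurj
    have hrn := LinearMap.finrank_range_add_finrank_ker
      ((fderiv ℝ G (t₀, θ₀, w₀)) : (ℝ × ℝ × (ℂ × ℂ)) →ₗ[ℝ] ℂ)
    have hkeq : LinearMap.ker ((fderiv ℝ G (t₀, θ₀, w₀)) : (ℝ × ℝ × (ℂ × ℂ)) →ₗ[ℝ] ℂ)
        = LinearMap.ker (fderiv ℝ G (t₀, θ₀, w₀) : ℝ × ℝ × (ℂ × ℂ) →ₗ[ℝ] ℂ) := rfl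
    have hreq : LinearMap.range ((fderiv ℝ G (t₀, θ₀, w₀)) : (ℝ × ℝ × (ℂ × ℂ)) →ₗ[ℝ] ℂ)
        = LinearMap.range (fderiv ℝ G (t₀, θ₀, w₀) : ℝ × ℝ × (ℂ × ℂ) →ₗ[ℝ] ℂ) := rfl
    rw [hkeq, hreq, hrange] at hrn
    have hdom : Module.finrank ℝ (ℝ × ℝ × (ℂ × ℂ)) = 6 := by
      simp [Module.finrank_prod, Complex.finrank_real_complex]
    have htop : Module.finrank ℝ (⊤ : Submodule ℝ ℂ) = 2 := by
      simp [Complex.finrank_real_complex]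
    rw [hdom, htop] at hrn
    omega
  · -- nondegeneracy
    rintro ⟨a₁, b₁, w₁⟩ hx hperp
    rw [hmem] at hx
    -- step 1: a₁ = 0
    have hy1 : ((0 : ℝ), (1 : ℝ), (0 : ℂ × ℂ)) ∈
        LinearMap.ker (fderiv ℝ G (t₀, θ₀, w₀) : ℝ × ℝ × (ℂ × ℂ) →ₗ[ℝ] ℂ) := by
      rw [hmem]; simp
    have ha₁ : a₁ = 0 := by
      have := hperp _ hy1
      rw [hΩ] at this
      simp at this
      rcases this with h | h
      · exact absurd h (ne_of_gt hK)
      · exact h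
    -- step 2: w₁ = 0
    have hDw₁ : D w₁ = 0 := by
      rw [ha₁] at hx
      simpa using hx
    have hw₁ : w₁ = 0 := by
      by_contra hne
      have hy2 : ((0 : ℝ), (0 : ℝ), Complex.I • w₁) ∈
          LinearMap.ker (fderiv ℝ G (t₀, θ₀, w₀) : ℝ × ℝ × (ℂ × ℂ) →ₗ[ℝ] ℂ) := by
        rw [hmem]
        simp [map_smul, hDw₁]
      have := hperp _ hy2
      rw [hΩ] at this
      simp at this
      exact absurd this (ne_of_gt (hω_tame w₁ hne))
    -- step 3: b₁ = 0
    obtain ⟨u, hu⟩ := hDsurj (-τ)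
    have hy3 : ((1 : ℝ), (0 : ℝ), u) ∈
        LinearMap.ker (fderiv ℝ G (t₀, θ₀, w₀) : ℝ × ℝ × (ℂ × ℂ) →ₗ[ℝ] ℂ) := by
      rw [hmem, hu]
      simp
    have hb₁ : b₁ = 0 := by
      have := hperp _ hy3
      rw [hΩ, ha₁, hw₁] at this
      simp at this
      rcases this with h | h
      · exact absurd h (ne_of_gt hK)
      · exact h
    rw [ha₁, hb₁, hw₁]
    rfl
end

section
/- Let g be a positive integer and define A : ℝ → Matrix (Fin 3) (Fin 3) ℂ by letting A(θ) be the diagonal matrix with diagonal entries exp(−2πiθ), exp(−(2g+2)πiθ), 1. Then the following are equivalent: (i) there exist a continuous map B : ℝ → Matrix (Fin 3) (Fin 3) ℂ and a function λ : ℝ → ℂ such that for every θ ∈ ℝ, B(θ) = λ(θ)·A(θ), B(θ) is unitary with det B(θ) = 1, and B(θ + 1) = B(θ); (ii) g ≡ 1 (mod 3). -/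
open scoped Real

private lemma exp_eq_exp_of_aux (a b : ℂ) (n : ℤ) (h : a = b + n * (2 * ↑π * Complex.I)) :
    Complex.exp a = Complex.exp b := by
  rw [h, Complex.exp_add, Complex.exp_int_mul_two_pi_mul_I, mul_one]

private lemma exp_mul_conj_aux (z : ℂ) (hz : (starRingEnd ℂ) z = -z) :
    Complex.exp z * (starRingEnd ℂ) (Complex.exp z) = 1 := by
  rw [← Complex.exp_conj, hz, ← Complex.exp_add, add_neg_cancel, Complex.exp_zero]

private lemma cube_const_aux {h : ℝ → ℂ} (hc : Continuous h)
    (h3 : ∀ θ, h θ ^ 3 = 1) : ∀ θ, h θ = h 0 := by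
  have hfin : ({z : ℂ | z ^ 3 = 1}).Finite := by
    have hne : (Polynomial.X ^ 3 - Polynomial.C 1 : Polynomial ℂ) ≠ 0 :=
      Polynomial.X_pow_sub_C_ne_zero (by norm_num) 1
    refine (Polynomial.finite_setOf_isRoot hne).subset ?_
    intro z hz
    simp only [Set.mem_setOf_eq] at hz ⊢
    simp [Polynomial.IsRoot, hz]
  haveI : Finite ({z : ℂ | z ^ 3 = 1} : Set ℂ) := hfin.to_subtype
  let h' : ℝ → ({z : ℂ | z ^ 3 = 1} : Set ℂ) := fun θ => ⟨h θ, h3 θ⟩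
  have hc' : Continuous h' := Continuous.subtype_mk hc _
  have hlc : IsLocallyConstant h' := (IsLocallyConstant.iff_continuous h').mpr hc'
  intro θ
  have := hlc.apply_eq_of_preconnectedSpace θ 0
  exact congrArg Subtype.val this

/-- The clutching loop `θ ↦ [A(θ)] ∈ PSU(3)`, with
`A(θ) = diag(e^{−2πiθ}, e^{−(2g+2)πiθ}, 1)`, lifts to a loop in `SU(3)` —
i.e. there is a continuous `1`-periodic family `B(θ)` of special unitary
matrices with `B(θ) = λ(θ)·A(θ)` — if and only if `g ≡ 1 (mod 3)`. -/
theorem stmt_11 (g : ℕ) (hg : 1 ≤ g)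
    (A : ℝ → Matrix (Fin 3) (Fin 3) ℂ)
    (hA : ∀ θ : ℝ, A θ = Matrix.diagonal
      ![Complex.exp (-2 * π * Complex.I * θ),
        Complex.exp (-(2 * (g : ℂ) + 2) * π * Complex.I * θ), 1]) :
    (∃ (B : ℝ → Matrix (Fin 3) (Fin 3) ℂ) (lam : ℝ → ℂ), Continuous B ∧
      ∀ θ : ℝ, B θ = lam θ • A θ ∧
        B θ ∈ Matrix.unitaryGroup (Fin 3) ℂ ∧ (B θ).det = 1 ∧
        B (θ + 1) = B θ) ↔ g % 3 = 1 := by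
  constructor
  · rintro ⟨B, lam, hBc, hB⟩
    have hA22 : ∀ θ : ℝ, A θ 2 2 = 1 := by
      intro θ; rw [hA]; simp
    have hlam : ∀ θ, B θ 2 2 = lam θ := by
      intro θ; rw [(hB θ).1, Matrix.smul_apply, hA22 θ, smul_eq_mul, mul_one]
    have hlamc : Continuous lam := by
      have h1 := hBc.matrix_elem 2 2
      have h2 : (fun θ => B θ 2 2) = lam := funext hlam
      rwa [h2] at h1
    have hdetA : ∀ θ : ℝ, (A θ).det =
        Complex.exp (-(2 * (g : ℂ) + 4) * π * Complex.I * θ) := by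
      intro θ
      rw [hA, Matrix.det_diagonal, Fin.prod_univ_three]
      simp only [Matrix.cons_val_zero, Matrix.cons_val_one, Matrix.head_cons,
        Matrix.cons_val_two, Matrix.tail_cons, mul_one]
      rw [← Complex.exp_add]
      congr 1
      ring
    have hcube : ∀ θ : ℝ, lam θ ^ 3 =
        Complex.exp ((2 * (g : ℂ) + 4) * π * Complex.I * θ) := by
      intro θ
      have hd := (hB θ).2.2.1
      rw [(hB θ).1, Matrix.det_smul, hdetA θ] at hd
      have hcard : (Fintype.card (Fin 3)) = 3 := by simp
      rw [hcard] at hd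
      have h1 : lam θ ^ 3 =
          (Complex.exp (-(2 * (g : ℂ) + 4) * π * Complex.I * θ))⁻¹ := by
        rw [mul_comm] at hd
        exact eq_inv_of_mul_eq_one_right hd
      rw [h1, ← Complex.exp_neg]
      congr 1
      ring
    -- the auxiliary continuous function h
    set c : ℂ := (2 * (g : ℂ) + 4) / 3 * π * Complex.I with hc
    let h : ℝ → ℂ := fun θ => lam θ * Complex.exp (-(c * θ))
    have hhc : Continuous h := by
      apply hlamc.mul
      apply Complex.continuous_exp.comp
      fun_prop
    have h3 : ∀ θ, h θ ^ 3 = 1 := by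
      intro θ
      show (lam θ * Complex.exp (-(c * θ))) ^ 3 = 1
      rw [mul_pow, hcube θ, ← Complex.exp_nat_mul, ← Complex.exp_add]
      rw [show (2 * (g : ℂ) + 4) * π * Complex.I * θ + (3 : ℕ) * -(c * θ) = 0 by
        rw [hc]; push_cast; ring]
      exact Complex.exp_zero
    have hconst := cube_const_aux hhc h3
    -- lam is 1-periodic
    have hper : lam 1 = lam 0 := by
      have := (hB 0).2.2.2
      rw [zero_add] at this
      rw [← hlam 1, ← hlam 0, this]
    have hlam0 : lam 0 ≠ 0 := by
      intro h0
      have := hcube 0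
      rw [h0] at this
      simp at this
    have h10 : h 1 = h 0 := hconst 1
    have h1v : lam 1 * Complex.exp (-c) = lam 0 := by
      have := h10
      show lam 1 * Complex.exp (-c) = lam 0
      simpa [h, Complex.ofReal_one, Complex.ofReal_zero] using this
    rw [hper] at h1v
    have hexp1 : Complex.exp (-c) = 1 := by
      have := h1v
      nth_rewrite 2 [← mul_one (lam 0)] at this
      exact mul_left_cancel₀ hlam0 this
    obtain ⟨n, hn⟩ := Complex.exp_eq_one_iff.mp hexp1
    have hπI : (π : ℂ) * Complex.I ≠ 0 :=
      mul_ne_zero (by exact_mod_cast Real.pi_ne_zero) Complex.I_ne_zero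
    have h1 : (-(2 * (g : ℂ) + 4)) * ((π : ℂ) * Complex.I) =
        (6 * (n : ℂ)) * ((π : ℂ) * Complex.I) := by
      rw [hc] at hn
      linear_combination 3 * hn
    have h2 : (-(2 * (g : ℂ) + 4)) = 6 * (n : ℂ) := mul_right_cancel₀ hπI h1
    have h3' : (-(2 * (g : ℤ) + 4)) = 6 * n := by exact_mod_cast h2
    omega
  · intro hg3
    obtain ⟨m, hm⟩ : ∃ m : ℕ, g + 2 = 3 * m := ⟨(g + 2) / 3, by omega⟩
    set lam : ℝ → ℂ := fun θ => Complex.exp (2 * π * Complex.I * m * θ) with hlamdef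
    refine ⟨fun θ => lam θ • A θ, lam, ?_, ?_⟩
    · have hlamc : Continuous lam := by
        apply Complex.continuous_exp.comp
        fun_prop
      have hAc : Continuous A := by
        rw [funext hA]
        apply Continuous.matrix_diagonal
        apply continuous_pi
        intro i
        fin_cases i <;> simp <;> fun_prop
      exact hlamc.smul hAc
    · intro θ
      have hmC : (3 : ℂ) * (m : ℂ) = (g : ℂ) + 2 := by exact_mod_cast hm.symm
      have hBθ : lam θ • A θ = Matrix.diagonal
          (lam θ • ![Complex.exp (-2 * π * Complex.I * θ),
            Complex.exp (-(2 * (g : ℂ) + 2) * π * Complex.I * θ), 1]) := by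
        rw [hA θ, Matrix.diagonal_smul]
      refine ⟨rfl, ?_, ?_, ?_⟩
      · -- unitary
        show lam θ • A θ ∈ Matrix.unitaryGroup (Fin 3) ℂ
        rw [Matrix.mem_unitaryGroup_iff, hBθ]
        rw [Matrix.star_eq_conjTranspose, Matrix.diagonal_conjTranspose,
          Matrix.diagonal_mul_diagonal]
        rw [← Matrix.diagonal_one, Matrix.diagonal_eq_diagonal_iff]
        intro i
        fin_cases i <;>
          simp only [Pi.mul_apply, Pi.star_apply, Pi.smul_apply, smul_eq_mul,
            Fin.reduceFinMk, Matrix.cons_val_zero, Matrix.cons_val_one,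
            Matrix.head_cons, Matrix.cons_val_two, Matrix.tail_cons,
            Pi.one_apply, mul_one, hlamdef] <;>
          (try rw [← Complex.exp_add]) <;>
        · rw [Complex.star_def]
          apply exp_mul_conj_aux
          simp only [map_add, map_mul, map_neg, map_ofNat, Complex.conj_ofReal,
            Complex.conj_I, map_natCast, map_one]
          ring
      · -- determinant
        show (lam θ • A θ).det = 1
        rw [hBθ, Matrix.det_diagonal, Fin.prod_univ_three]
        simp only [Pi.smul_apply, smul_eq_mul, Matrix.cons_val_zero,
          Matrix.cons_val_one, Matrix.head_cons, Matrix.cons_val_two,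
          Matrix.tail_cons, mul_one, hlamdef]
        rw [← Complex.exp_add, ← Complex.exp_add, ← Complex.exp_add, ← Complex.exp_add]
        rw [show 2 * (π : ℂ) * Complex.I * m * θ + -2 * π * Complex.I * θ +
            (2 * (π : ℂ) * Complex.I * m * θ + -(2 * (g : ℂ) + 2) * π * Complex.I * θ) +
            2 * (π : ℂ) * Complex.I * m * θ = 0 from by
          linear_combination (2 * (π : ℂ) * Complex.I * θ) * hmC]
        exact Complex.exp_zero
      · -- periodicity
        show lam (θ + 1) • A (θ + 1) = lam θ • A θ
        rw [hA (θ + 1), hA θ, ← Matrix.diagonal_smul, ← Matrix.diagonal_smul,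
          Matrix.diagonal_eq_diagonal_iff]
        intro i
        fin_cases i <;>
          simp only [Pi.smul_apply, smul_eq_mul, Fin.reduceFinMk,
            Matrix.cons_val_zero, Matrix.cons_val_one, Matrix.head_cons,
            Matrix.cons_val_two, Matrix.tail_cons, mul_one, hlamdef]
        · rw [← Complex.exp_add, ← Complex.exp_add]
          exact exp_eq_exp_of_aux _ _ ((m : ℤ) - 1) (by push_cast; ring)
        · rw [← Complex.exp_add, ← Complex.exp_add]
          refine exp_eq_exp_of_aux _ _ ((m : ℤ) - (g : ℤ) - 1) ?_
          push_cast; ring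
        · exact exp_eq_exp_of_aux _ _ (m : ℤ) (by push_cast; ring)
end
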